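/- Let (g,B,S) be a finite-dimensional quadratic Rota–Baxter Lie algebra of weight λ over a field K, let I_S : Dual(g) → g be the inverse of the linear isomorphism g → Dual(g), x ↦ S(x,·), and let τ be a reflection on (g,B,S). Then (τ − id) ∘ (B + λ·id) ∘ I_S ∘ (τ* − id) = 0, where τ* : Dual(g) → Dual(g) is ξ ↦ ξ∘τ. (This is the operator form of the classical reflection equation: for λ = 0 it says τ solves the classical reflection equation for the triangular r-matrix with r₊ = B∘I_S, and for λ ≠ 0, after multiplying by λ⁻¹, for the factorizable r-matrix with r₊ = λ⁻¹(B+λ·id)∘I_S.) -/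
import Mathlib


/-- For a finite-dimensional quadratic Rota–Baxter Lie algebra `(g, B, S)`
of weight `lam` with a reflection `τ`, the operator identity
`(τ − id) ∘ (B + lam·id) ∘ I_S ∘ (τ* − id) = 0` holds, where `I_S` is the inverse of
`x ↦ S(x, ·)` and `τ* ξ = ξ ∘ τ`. -/
theorem stmt0 (K g : Type*) [Field K] [LieRing g] [LieAlgebra K g] [FiniteDimensional K g]
    (lam : K) (B : g →ₗ[K] g) (S : g →ₗ[K] g →ₗ[K] K)
    -- `B` is a Rota–Baxter operator of weight `lam`
    (hB : ∀ x y : g, ⁅B x, B y⁆ = B (⁅B x, y⁆ + ⁅x, B y⁆ + lam • ⁅x, y⁆))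
    -- `S` is symmetric, nondegenerate, invariant
    (hSsymm : ∀ x y : g, S x y = S y x)
    (hSnondeg : ∀ x : g, (∀ y : g, S x y = 0) → x = 0)
    (hSinv : ∀ x y z : g, S ⁅x, y⁆ z + S y ⁅x, z⁆ = 0)
    -- compatibility of `S` and `B`
    (hSB : ∀ x y : g, S x (B y) + S (B x) y + lam * S x y = 0)
    -- `I_S` is the inverse of the isomorphism `x ↦ S(x,·)`
    (IS : Module.Dual K g →ₗ[K] g)
    (hIS : ∀ (ξ : Module.Dual K g) (y : g), S (IS ξ) y = ξ y)
    (hIS' : ∀ x : g, IS (S x) = x)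
    -- `τ` is a reflection: a Lie algebra automorphism with
    -- `(τ−id)∘(B+lam·id)∘(τ+id) = 0` and `S(τx,y)+S(x,τy)=0`
    (τ : g ≃ₗ[K] g)
    (hτbr : ∀ x y : g, τ ⁅x, y⁆ = ⁅τ x, τ y⁆)
    (hτ1 : ∀ x : g, τ (B (τ x + x) + lam • (τ x + x)) - (B (τ x + x) + lam • (τ x + x)) = 0)
    (hτS : ∀ x y : g, S (τ x) y + S x (τ y) = 0) :
    ∀ ξ : Module.Dual K g,
      τ (B (IS (ξ ∘ₗ (τ : g →ₗ[K] g) - ξ)) + lam • IS (ξ ∘ₗ (τ : g →ₗ[K] g) - ξ))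
        - (B (IS (ξ ∘ₗ (τ : g →ₗ[K] g) - ξ)) + lam • IS (ξ ∘ₗ (τ : g →ₗ[K] g) - ξ)) = 0 := by
  intro ξ
  set x := IS ξ with hx
  have key : ξ ∘ₗ (τ : g →ₗ[K] g) - ξ = S (-(τ x + x)) := by
    ext y
    have h1 : S x y = ξ y := hIS ξ y
    have h2 : S x (τ y) = ξ (τ y) := hIS ξ (τ y)
    have h3 := hτS x y
    simp only [LinearMap.sub_apply, LinearMap.coe_comp, Function.comp_apply,
      LinearMap.coe_coe, map_neg, map_add, LinearMap.neg_apply, LinearMap.add_apply]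
    linear_combination h1 - h2 + h3
  rw [key, hIS']
  have := hτ1 x
  have hlin : B (-(τ x + x)) + lam • (-(τ x + x)) = -(B (τ x + x) + lam • (τ x + x)) := by
    simp only [map_neg, map_add, smul_neg, smul_add, neg_add]
  rw [hlin, map_neg, neg_sub_neg, ← neg_sub, this, neg_zero]
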